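/- Let a, b be distinct vertices of a k-connected graph, each contained in a small tight set, with minimal small tight sets A = R_a and B = R_b. If A and B are not laminar (neither disjoint nor one contained in the other), then a ∈ ∂B or b ∈ ∂A. -/

import Mathlib

open Set

variable {V : Type*} [Fintype V] [DecidableEq V]

/-- The boundary (neighborhood) of a vertex set: vertices outside `A` adjacent to `A`. -/
def bdry (G : SimpleGraph V) (A : Set V) : Set V := {v | v ∉ A ∧ ∃ a ∈ A, G.Adj a v}

/-- The "node complement" `A* = V \ (A ∪ ∂A)`. -/
def nstar (G : SimpleGraph V) (A : Set V) : Set V := (A ∪ bdry G A)ᶜ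

/-- `C` is a vertex set separating `s` from `t`. -/
def IsSep (G : SimpleGraph V) (s t : V) (C : Set V) : Prop :=
  s ∉ C ∧ t ∉ C ∧ ∀ p : G.Walk s t, ∃ v ∈ C, v ∈ p.support

/-- `κ(s,t)`: minimum size of an `s`–`t` vertex cut. -/
noncomputable def kappa (G : SimpleGraph V) (s t : V) : ℕ :=
  sInf {n | ∃ C : Set V, C.ncard = n ∧ IsSep G s t C}

/-- A set is tight if `|∂A| = k` and `A* ≠ ∅`. -/
def Tight (G : SimpleGraph V) (k : ℕ) (A : Set V) : Prop :=
  (bdry G A).ncard = k ∧ (nstar G A).Nonempty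

/-- A set is small if `|A| ≤ (n - k)/2`. -/
def SmallSet (k : ℕ) (A : Set V) : Prop := 2 * A.ncard + k ≤ Fintype.card V

/-- `G` is `k`-connected. -/
def KConn (G : SimpleGraph V) (k : ℕ) : Prop :=
  k + 1 ≤ Fintype.card V ∧
    ∀ s t : V, s ≠ t → ∀ C : Set V, IsSep G s t C → k ≤ C.ncard

/-- degree of a vertex -/
noncomputable def deg (G : SimpleGraph V) (v : V) : ℕ := (G.neighborSet v).ncard

/-- `X` is an `st`-tight set: `s ∈ X`, `t ∈ X*` and `|∂X| = κ(s,t)`. -/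
def TightST (G : SimpleGraph V) (s t : V) (X : Set V) : Prop :=
  s ∈ X ∧ t ∈ nstar G X ∧ (bdry G X).ncard = kappa G s t

/-- `R_s`: intersection of all small tight sets containing `s`. -/
def Rmin (G : SimpleGraph V) (k : ℕ) (s : V) : Set V :=
  ⋂₀ {A : Set V | Tight G k A ∧ SmallSet k A ∧ s ∈ A}

/-- Two sets are laminar if disjoint or one contains the other. -/
def Laminar (X Y : Set V) : Prop := Disjoint X Y ∨ X ⊆ Y ∨ Y ⊆ X

/-- `d`-degeneracy: every nonempty vertex subset has a vertex with at most `d`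
neighbors inside it. -/
def Degenerate (G : SimpleGraph V) (d : ℕ) : Prop :=
  ∀ W : Set V, W.Nonempty → ∃ v ∈ W, (G.neighborSet v ∩ W).ncard ≤ d

/-- The set of vertices reachable from `s` avoiding `C`. -/
def Reach (G : SimpleGraph V) (C : Set V) (s : V) : Set V :=
  {v | ∃ p : G.Walk s v, ∀ u ∈ p.support, u ∉ C}

section Aux

variable {G : SimpleGraph V} {k : ℕ}

lemma hull_mono {P X : Set V} (h : P ⊆ X) : P ∪ bdry G P ⊆ X ∪ bdry G X := by
  rintro v (hv | ⟨hvP, u, huP, hadj⟩)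
  · exact Or.inl (h hv)
  · by_cases hvX : v ∈ X
    · exact Or.inl hvX
    · exact Or.inr ⟨hvX, u, h huP, hadj⟩

lemma nstar_anti {P X : Set V} (h : P ⊆ X) : nstar G X ⊆ nstar G P :=
  Set.compl_subset_compl.2 (hull_mono h)

lemma walk_hits (X : Set V) {s t : V} (p : G.Walk s t) (hs : s ∈ X) (ht : t ∉ X) :
    ∃ v ∈ bdry G X, v ∈ p.support := by
  induction p with
  | nil => exact absurd hs ht
  | @cons s u t h q ih =>
    by_cases hu : u ∈ X
    · obtain ⟨v, hv, hvs⟩ := ih hu ht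
      exact ⟨v, hv, by simp [hvs]⟩
    · exact ⟨u, ⟨hu, s, hs, h⟩, by simp⟩

lemma isSep_bdry {X : Set V} {s t : V} (hs : s ∈ X) (ht : t ∈ nstar G X) :
    IsSep G s t (bdry G X) := by
  have ht' : t ∉ X ∪ bdry G X := ht
  refine ⟨fun h => h.1 hs, fun h => ht' (Or.inr h), fun p => ?_⟩
  exact walk_hits X p hs (fun h => ht' (Or.inl h))

lemma k_le_bdry (hG : KConn G k) {X : Set V} (hX : X.Nonempty)
    (hX' : (nstar G X).Nonempty) : k ≤ (bdry G X).ncard := by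
  obtain ⟨s, hs⟩ := hX
  obtain ⟨t, ht⟩ := hX'
  have hst : s ≠ t := by
    rintro rfl
    exact ht (Or.inl hs)
  exact hG.2 s t hst _ (isSep_bdry hs ht)

lemma key_count {P Q A B : Set V} (hP : P ⊆ A ∪ B) (hQ : Q ⊆ A ∪ B)
    (hPQ : P ∩ Q ⊆ A ∩ B) : P.ncard + Q.ncard ≤ A.ncard + B.ncard := by
  have h1 : (P ∪ Q).ncard + (P ∩ Q).ncard = P.ncard + Q.ncard :=
    Set.ncard_union_add_ncard_inter P Q (Set.toFinite P) (Set.toFinite Q)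
  have h2 : (A ∪ B).ncard + (A ∩ B).ncard = A.ncard + B.ncard :=
    Set.ncard_union_add_ncard_inter A B (Set.toFinite A) (Set.toFinite B)
  have h3 : (P ∪ Q).ncard ≤ (A ∪ B).ncard :=
    Set.ncard_le_ncard (Set.union_subset hP hQ) (Set.toFinite _)
  have h4 : (P ∩ Q).ncard ≤ (A ∩ B).ncard :=
    Set.ncard_le_ncard hPQ (Set.toFinite _)
  omega

lemma bdry_inter_subset (X Y : Set V) : bdry G (X ∩ Y) ⊆ bdry G X ∪ bdry G Y := by
  rintro v ⟨hv, u, ⟨huX, huY⟩, hadj⟩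
  by_cases hvX : v ∈ X
  · have hvY : v ∉ Y := fun hvY => hv ⟨hvX, hvY⟩
    exact Or.inr ⟨hvY, u, huY, hadj⟩
  · exact Or.inl ⟨hvX, u, huX, hadj⟩

lemma bdry_union_subset (X Y : Set V) : bdry G (X ∪ Y) ⊆ bdry G X ∪ bdry G Y := by
  rintro v ⟨hv, u, hu, hadj⟩
  have hvX : v ∉ X := fun h => hv (Or.inl h)
  have hvY : v ∉ Y := fun h => hv (Or.inr h)
  rcases hu with hu | hu
  · exact Or.inl ⟨hvX, u, hu, hadj⟩
  · exact Or.inr ⟨hvY, u, hu, hadj⟩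

lemma bdry_inter_union_subset (X Y : Set V) :
    bdry G (X ∩ Y) ∩ bdry G (X ∪ Y) ⊆ bdry G X ∩ bdry G Y := by
  rintro v ⟨⟨_, u, ⟨huX, huY⟩, hadj⟩, ⟨hv, _⟩⟩
  have hvX : v ∉ X := fun h => hv (Or.inl h)
  have hvY : v ∉ Y := fun h => hv (Or.inr h)
  exact ⟨⟨hvX, u, huX, hadj⟩, ⟨hvY, u, huY, hadj⟩⟩

lemma not_mem_of_adj_nstar {Y : Set V} {u v : V} (hu : u ∈ nstar G Y)
    (hadj : G.Adj u v) : v ∉ Y := by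
  intro hvY
  have hu' : u ∉ Y ∪ bdry G Y := hu
  exact hu' (Or.inr ⟨fun h => hu' (Or.inl h), v, hvY, hadj.symm⟩)

lemma bdry_cross_subset (X Y : Set V) :
    bdry G (X ∩ nstar G Y) ⊆ bdry G X ∪ bdry G Y := by
  rintro v ⟨hv, u, ⟨huX, huY⟩, hadj⟩
  have hvY : v ∉ Y := not_mem_of_adj_nstar huY hadj
  by_cases hvX : v ∈ X
  · have hvY' : v ∉ nstar G Y := fun h => hv ⟨hvX, h⟩
    have : v ∈ Y ∪ bdry G Y := by
      by_contra h
      exact hvY' h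
    rcases this with h | h
    · exact absurd h hvY
    · exact Or.inr h
  · exact Or.inl ⟨hvX, u, huX, hadj⟩

lemma bdry_cross_inter_subset (X Y : Set V) :
    bdry G (X ∩ nstar G Y) ∩ bdry G (Y ∩ nstar G X) ⊆ bdry G X ∩ bdry G Y := by
  rintro v ⟨⟨_, u, ⟨huX, huY⟩, hu⟩, ⟨_, w, ⟨hwY, hwX⟩, hw⟩⟩
  have hvY : v ∉ Y := not_mem_of_adj_nstar huY hu
  have hvX : v ∉ X := not_mem_of_adj_nstar hwX hw
  exact ⟨⟨hvX, u, huX, hu⟩, ⟨hvY, w, hwY, hw⟩⟩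

lemma tight_inter (hG : KConn G k) {X Y : Set V} {s : V}
    (hX : Tight G k X ∧ SmallSet k X ∧ s ∈ X)
    (hY : Tight G k Y ∧ SmallSet k Y ∧ s ∈ Y) :
    Tight G k (X ∩ Y) ∧ SmallSet k (X ∩ Y) ∧ s ∈ X ∩ Y := by
  obtain ⟨⟨hXk, hXs⟩, hXsm, hsX⟩ := hX
  obtain ⟨⟨hYk, hYs⟩, hYsm, hsY⟩ := hY
  have hne : (X ∩ Y).Nonempty := ⟨s, hsX, hsY⟩
  have hstar : (nstar G X) ⊆ nstar G (X ∩ Y) := nstar_anti Set.inter_subset_left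
  have hstar' : (nstar G (X ∩ Y)).Nonempty := hXs.mono hstar
  have hlow : k ≤ (bdry G (X ∩ Y)).ncard := k_le_bdry hG hne hstar'
  -- |∂(X∪Y)| ≥ k
  have hUunion : k ≤ (bdry G (X ∪ Y)).ncard := by
    by_cases hUs : (nstar G (X ∪ Y)).Nonempty
    · exact k_le_bdry hG ⟨s, Or.inl hsX⟩ hUs
    · have hempty : nstar G (X ∪ Y) = ∅ := Set.not_nonempty_iff_eq_empty.mp hUs
      have hempty' : ((X ∪ Y) ∪ bdry G (X ∪ Y))ᶜ = (∅ : Set V) := hempty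
      have huniv : X ∪ Y ∪ bdry G (X ∪ Y) = Set.univ := Set.compl_empty_iff.mp hempty'
      have hcard : Fintype.card V ≤ (X ∪ Y).ncard + (bdry G (X ∪ Y)).ncard := by
        have h1 : (Set.univ : Set V).ncard = Fintype.card V := by
          simp [Set.ncard_univ, Nat.card_eq_fintype_card]
        calc Fintype.card V = (Set.univ : Set V).ncard := h1.symm
          _ = (X ∪ Y ∪ bdry G (X ∪ Y)).ncard := by rw [huniv]
          _ ≤ (X ∪ Y).ncard + (bdry G (X ∪ Y)).ncard :=
              Set.ncard_union_le _ _
      have h2 : (X ∪ Y).ncard ≤ X.ncard + Y.ncard :=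
        Set.ncard_union_le _ _
      have := hXsm
      have := hYsm
      unfold SmallSet at *
      omega
  have hsub : (bdry G (X ∩ Y)).ncard + (bdry G (X ∪ Y)).ncard ≤ k + k := by
    have := key_count (bdry_inter_subset (G := G) X Y) (bdry_union_subset (G := G) X Y)
      (bdry_inter_union_subset (G := G) X Y)
    omega
  have hk : (bdry G (X ∩ Y)).ncard = k := by omega
  have hsm : SmallSet k (X ∩ Y) := by
    have : (X ∩ Y).ncard ≤ X.ncard := Set.ncard_le_ncard Set.inter_subset_left (Set.toFinite _)
    unfold SmallSet at *
    omega
  exact ⟨⟨hk, hstar'⟩, hsm, hsX, hsY⟩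

lemma Rmin_mem (hG : KConn G k) {s : V}
    (hs : ∃ A : Set V, Tight G k A ∧ SmallSet k A ∧ s ∈ A) :
    Tight G k (Rmin G k s) ∧ SmallSet k (Rmin G k s) ∧ s ∈ Rmin G k s := by
  set S : Set (Set V) := {A : Set V | Tight G k A ∧ SmallSet k A ∧ s ∈ A} with hSdef
  have hSne : S.Nonempty := hs
  obtain ⟨X, hXS, hXmin⟩ := Set.Finite.exists_minimalFor Set.ncard S (Set.toFinite S) hSne
  have hXsub : ∀ Y ∈ S, X ⊆ Y := by
    intro Y hYS
    have hinter : X ∩ Y ∈ S := tight_inter hG hXS hYS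
    have hle : (X ∩ Y).ncard ≤ X.ncard :=
      Set.ncard_le_ncard Set.inter_subset_left (Set.toFinite _)
    have heq : X.ncard = (X ∩ Y).ncard := le_antisymm (hXmin hinter hle) hle
    have : X ∩ Y = X :=
      Set.eq_of_subset_of_ncard_le Set.inter_subset_left (le_of_eq heq) (Set.toFinite _)
    intro v hv
    rw [← this] at hv
    exact hv.2
  have hRX : Rmin G k s = X := by
    apply Set.Subset.antisymm
    · exact Set.sInter_subset_of_mem hXS
    · exact Set.subset_sInter hXsub
  rw [hRX]
  exact hXS

end Aux

theorem stmt5 (G : SimpleGraph V) (k : ℕ) (a b : V) (hG : KConn G k) (hab : a ≠ b)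
    (ha : ∃ A : Set V, Tight G k A ∧ SmallSet k A ∧ a ∈ A)
    (hb : ∃ A : Set V, Tight G k A ∧ SmallSet k A ∧ b ∈ A)
    (hnl : ¬ Laminar (Rmin G k a) (Rmin G k b)) :
    a ∈ bdry G (Rmin G k b) ∨ b ∈ bdry G (Rmin G k a) := by
  by_contra hcon
  push_neg at hcon
  obtain ⟨haB, hbA⟩ := hcon
  obtain ⟨hAt, hAsm, haA⟩ := Rmin_mem hG ha
  obtain ⟨hBt, hBsm, hbB⟩ := Rmin_mem hG hb
  set A := Rmin G k a with hAdef
  set B := Rmin G k b with hBdef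
  unfold Laminar at hnl
  push_neg at hnl
  obtain ⟨hdisj, hAB, hBA⟩ := hnl
  -- a ∉ B
  have haB' : a ∉ B := by
    intro h
    exact hAB (Set.sInter_subset_of_mem (⟨hBt, hBsm, h⟩ :
      B ∈ {A : Set V | Tight G k A ∧ SmallSet k A ∧ a ∈ A}))
  have hbA' : b ∉ A := by
    intro h
    exact hBA (Set.sInter_subset_of_mem (⟨hAt, hAsm, h⟩ :
      A ∈ {X : Set V | Tight G k X ∧ SmallSet k X ∧ b ∈ X}))
  have haBs : a ∈ nstar G B := by
    intro h
    rcases h with h | h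
    · exact haB' h
    · exact haB h
  have hbAs : b ∈ nstar G A := by
    intro h
    rcases h with h | h
    · exact hbA' h
    · exact hbA h
  obtain ⟨c, hcA, hcB⟩ := Set.not_disjoint_iff.mp hdisj
  set P := A ∩ nstar G B with hPdef
  set Q := B ∩ nstar G A with hQdef
  have haP : a ∈ P := ⟨haA, haBs⟩
  have hbQ : b ∈ Q := ⟨hbB, hbAs⟩
  have hPstar : (nstar G P).Nonempty := ⟨b, nstar_anti Set.inter_subset_left hbAs⟩
  have hQstar : (nstar G Q).Nonempty := ⟨a, nstar_anti Set.inter_subset_left haBs⟩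
  have hPk : k ≤ (bdry G P).ncard := k_le_bdry hG ⟨a, haP⟩ hPstar
  have hQk : k ≤ (bdry G Q).ncard := k_le_bdry hG ⟨b, hbQ⟩ hQstar
  have hsum : (bdry G P).ncard + (bdry G Q).ncard ≤ (bdry G A).ncard + (bdry G B).ncard :=
    key_count (bdry_cross_subset (G := G) A B) (by
      have := bdry_cross_subset (G := G) B A
      intro v hv
      rcases this hv with h | h
      · exact Or.inr h
      · exact Or.inl h) (by
      have := bdry_cross_inter_subset (G := G) A B
      intro v hv
      have h := this ⟨hv.1, hv.2⟩
      exact h)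
  have hPkeq : (bdry G P).ncard = k := by
    have h1 := hAt.1
    have h2 := hBt.1
    omega
  have hPsm : SmallSet k P := by
    have : P.ncard ≤ A.ncard := Set.ncard_le_ncard Set.inter_subset_left (Set.toFinite _)
    unfold SmallSet at *
    omega
  have hPS : P ∈ {X : Set V | Tight G k X ∧ SmallSet k X ∧ a ∈ X} :=
    ⟨⟨hPkeq, hPstar⟩, hPsm, haP⟩
  have hAP : A ⊆ P := Set.sInter_subset_of_mem hPS
  have hcP : c ∈ P := hAP hcA
  exact hcP.2 (Or.inl hcB)
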